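/- arXiv:2401.02581 — 5 statements merged into one kernel-verified Lean document; each statement's English description precedes it below -/
import Mathlib

section
/- Let X̄ > 0 and Ȳ > 0 be reals, let S ⊆ ℝ, let f, g : ℝ → ℝ be strictly monotone increasing on [0, ∞), and let h : ℝ → ℝ be arbitrary. Define the feasible set K = {(x, y) ∈ ℝ × ℝ : 0 ≤ x ≤ X̄, 0 ≤ y ≤ Ȳ, and x − y ∈ S}. If (x*, y*) ∈ K satisfies f(x*) + g(y*) + h(x* − y*) ≤ f(x) + g(y) + h(x − y) for all (x, y) ∈ K, then x* · y* = 0. -/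
/-- Lemma 1 of the paper: at an optimum of `f x + g y + h (x - y)` over the box
constraints with a net-flow constraint `x - y ∈ S`, where `f, g` are strictly
increasing on `[0, ∞)`, the two flows cannot both be positive: `x* ⬝ y* = 0`. -/
theorem stmt_1 (Xbar Ybar : ℝ) (hX : 0 < Xbar) (hY : 0 < Ybar) (S : Set ℝ)
    (f g h : ℝ → ℝ)
    (hf : ∀ x y : ℝ, 0 ≤ x → x < y → f x < f y)
    (hg : ∀ x y : ℝ, 0 ≤ x → x < y → g x < g y)
    (K : Set (ℝ × ℝ))
    (hK : K = {p : ℝ × ℝ | 0 ≤ p.1 ∧ p.1 ≤ Xbar ∧ 0 ≤ p.2 ∧ p.2 ≤ Ybar ∧ p.1 - p.2 ∈ S})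
    (xs ys : ℝ) (hmem : (xs, ys) ∈ K)
    (hopt : ∀ p ∈ K, f xs + g ys + h (xs - ys) ≤ f p.1 + g p.2 + h (p.1 - p.2)) :
    xs * ys = 0 := by
  subst hK
  obtain ⟨hx0, hxX, hy0, hyY, hS⟩ := hmem
  dsimp only at hx0 hxX hy0 hyY hS
  by_contra hne
  have hx : 0 < xs := lt_of_le_of_ne hx0 (fun e => hne (by rw [← e]; ring))
  have hy : 0 < ys := lt_of_le_of_ne hy0 (fun e => hne (by rw [← e]; ring))
  set d := min xs ys with hd
  have hdpos : 0 < d := lt_min hx hy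
  have hdx : d ≤ xs := min_le_left _ _
  have hdy : d ≤ ys := min_le_right _ _
  have hmem' : ((xs - d, ys - d) : ℝ × ℝ) ∈
      {p : ℝ × ℝ | 0 ≤ p.1 ∧ p.1 ≤ Xbar ∧ 0 ≤ p.2 ∧ p.2 ≤ Ybar ∧ p.1 - p.2 ∈ S} := by
    refine ⟨by dsimp only; linarith, by dsimp only; linarith, by dsimp only; linarith,
      by dsimp only; linarith, ?_⟩
    dsimp only
    have : xs - d - (ys - d) = xs - ys := by ring
    rw [this]; exact hS
  have := hopt _ hmem'
  simp only at this
  have hfx : f (xs - d) < f xs := hf _ _ (by linarith) (by linarith)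
  have hgy : g (ys - d) < g ys := hg _ _ (by linarith) (by linarith)
  have heq : xs - d - (ys - d) = xs - ys := by ring
  rw [heq] at this
  linarith
end

section
/- Let f : EuclideanSpace ℝ (Fin n) → ℝ be continuously differentiable and σ-strongly convex with σ > 0, let A be an m × n real matrix and a ∈ EuclideanSpace ℝ (Fin m). Then: (i) for every μ ∈ EuclideanSpace ℝ (Fin m) the Lagrangian x ↦ L(x, μ) = f(x) + ⟨μ, A.mulVec x − a⟩ has a unique global minimizer x*(μ); (ii) the dual function Ψ(μ) = inf over x of L(x, μ) is differentiable everywhere, with gradient ∇Ψ(μ) = A.mulVec (x*(μ)) − a. -/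
/-- Reinterpret a plain vector `Fin m → ℝ` as an element of `EuclideanSpace ℝ (Fin m)`. -/
def toEuc (m : ℕ) (v : Fin m → ℝ) : EuclideanSpace ℝ (Fin m) := WithLp.toLp 2 v

open RealInnerProductSpace

section Aux

variable {E : Type*} [NormedAddCommGroup E] [InnerProductSpace ℝ E]

lemma aux_combo (x y : E) (t : ℝ) :
    ‖(1-t)•x + t•y‖^2 = (1-t)*‖x‖^2 + t*‖y‖^2 - t*(1-t)*‖x-y‖^2 := by
  simp only [← real_inner_self_eq_norm_sq, inner_add_add_self, inner_sub_sub_self,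
    real_inner_smul_left, real_inner_smul_right]
  ring

lemma aux_growth {σ : ℝ} (hσ : 0 < σ) {g : E → ℝ}
    (hconv : ConvexOn ℝ Set.univ (fun x => g x - σ/2*‖x‖^2))
    {x₀ : E} (hmin : ∀ x, g x₀ ≤ g x) (x : E) :
    g x₀ + σ/2*‖x - x₀‖^2 ≤ g x := by
  have key : ∀ t : ℝ, t ∈ Set.Ioo (0:ℝ) 1 → g x₀ + σ/2*(1-t)*‖x - x₀‖^2 ≤ g x := by
    intro t ht
    have hc := hconv.2 (Set.mem_univ x₀) (Set.mem_univ x)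
      (by linarith [ht.1, ht.2] : (0:ℝ) ≤ 1 - t) (le_of_lt ht.1) (by ring)
    simp only [smul_eq_mul] at hc
    have hm := hmin ((1-t) • x₀ + t • x)
    have hid := aux_combo x₀ x t
    have hn : ‖x₀ - x‖ = ‖x - x₀‖ := norm_sub_rev _ _
    rw [hid, hn] at hc
    nlinarith [ht.1, ht.2, sq_nonneg ‖x - x₀‖]
  have hlim : Filter.Tendsto (fun t : ℝ => g x₀ + σ/2*(1-t)*‖x - x₀‖^2)
      (nhdsWithin 0 (Set.Ioi 0)) (nhds (g x₀ + σ/2*‖x - x₀‖^2)) := by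
    have : Filter.Tendsto (fun t : ℝ => g x₀ + σ/2*(1-t)*‖x - x₀‖^2)
        (nhds 0) (nhds (g x₀ + σ/2*(1-0)*‖x - x₀‖^2)) := by
      apply Continuous.tendsto
      continuity
    simpa using this.mono_left nhdsWithin_le_nhds
  refine le_of_tendsto hlim ?_
  filter_upwards [Ioo_mem_nhdsGT_of_mem (by norm_num : (0:ℝ) ∈ Set.Ico (0:ℝ) 1)] with t ht
  exact key t ht

lemma aux_exists [FiniteDimensional ℝ E] {σ : ℝ} (hσ : 0 < σ) {g : E → ℝ}
    (hg : Continuous g)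
    (hconv : ConvexOn ℝ Set.univ (fun x => g x - σ/2*‖x‖^2)) :
    ∃ x₀ : E, ∀ x, g x₀ ≤ g x := by
  set φ : E → ℝ := fun x => g x - σ/2*‖x‖^2 with hφ
  have hφc : Continuous φ := by fun_prop
  obtain ⟨y₀, hy₀mem, hy₀⟩ := (isCompact_closedBall (0:E) 1).exists_isMinOn
    (Metric.nonempty_closedBall.2 zero_le_one) hφc.continuousOn
  set B : ℝ := |φ y₀| + |φ (0:E)| with hB
  have hBnn : 0 ≤ B := add_nonneg (abs_nonneg _) (abs_nonneg _)
  clear_value φ B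
  have hball : ∀ y : E, ‖y‖ ≤ 1 → -B ≤ φ y := by
    intro y hy
    have h1 : φ y₀ ≤ φ y := hy₀ (by
      simpa [Metric.mem_closedBall, dist_zero_right] using hy)
    have h2 : -|φ y₀| ≤ φ y₀ := neg_abs_le _
    have h3 : (0:ℝ) ≤ |φ (0:E)| := abs_nonneg _
    simp only [hB]
    linarith
  -- coercivity
  have hcoer : ∀ x : E, 1 ≤ ‖x‖ → σ/2*‖x‖^2 - 2*B*‖x‖ ≤ g x := by
    intro x hx
    have hR0 : (0:ℝ) < ‖x‖ := lt_of_lt_of_le one_pos hx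
    set u : E := ‖x‖⁻¹ • x with hu
    have hunorm : ‖u‖ = 1 := by
      rw [hu, norm_smul, norm_inv, norm_norm, inv_mul_cancel₀ hR0.ne']
    have hcomb : (1 - ‖x‖⁻¹) • (0:E) + ‖x‖⁻¹ • x = u := by simp [hu]
    have ha : (0:ℝ) ≤ 1 - ‖x‖⁻¹ := by
      rw [sub_nonneg]; exact inv_le_one_of_one_le₀ hx
    have hb : (0:ℝ) ≤ ‖x‖⁻¹ := le_of_lt (inv_pos.2 hR0)
    have hc := hconv.2 (Set.mem_univ (0:E)) (Set.mem_univ x) ha hb (by ring)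
    rw [hcomb] at hc
    simp only [smul_eq_mul] at hc
    have h1 : -B ≤ φ u := hball u (le_of_eq hunorm)
    have h0 : -B ≤ φ 0 := hball 0 (by simp)
    have h0' : φ 0 ≤ B := by
      have h3 : φ (0:E) ≤ |φ (0:E)| := le_abs_self _
      have h4 : (0:ℝ) ≤ |φ y₀| := abs_nonneg _
      simp only [hB]; linarith
    have hgx : g x = φ x + σ/2*‖x‖^2 := by rw [hφ]; ring
    -- from hc : φ u ≤ (1-‖x‖⁻¹) * φ 0 + ‖x‖⁻¹ * φ x
    have hinv : ‖x‖⁻¹ * ‖x‖ = 1 := inv_mul_cancel₀ hR0.ne'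
    have hinv2 : ‖x‖ * ‖x‖⁻¹ = 1 := mul_inv_cancel₀ hR0.ne'
    have e1 : ‖x‖ * ((1 - ‖x‖⁻¹) * φ 0 + ‖x‖⁻¹ * φ x) = (‖x‖-1) * φ 0 + φ x := by
      linear_combination (φ x - φ 0) * hinv2
    have c1 := mul_le_mul_of_nonneg_left hc (le_of_lt hR0)
    rw [e1] at c1
    have c2 := mul_le_mul_of_nonneg_left h1 (le_of_lt hR0)
    have c3 := mul_le_mul_of_nonneg_left h0' (by linarith : (0:ℝ) ≤ ‖x‖ - 1)
    nlinarith [c1, c2, c3]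
  -- choose radius
  set R₀ : ℝ := max 1 ((2*B + |g 0| + 1) * 2 / σ) with hR₀
  obtain ⟨x₀, hx₀mem, hx₀⟩ := (isCompact_closedBall (0:E) R₀).exists_isMinOn
    (Metric.nonempty_closedBall.2 (le_trans zero_le_one (le_max_left _ _)))
    hg.continuousOn
  refine ⟨x₀, fun x => ?_⟩
  by_cases hx : ‖x‖ ≤ R₀
  · exact hx₀ (by simpa [Metric.mem_closedBall, dist_zero_right] using hx)
  · push_neg at hx
    have h1 : (1:ℝ) ≤ ‖x‖ := le_of_lt (lt_of_le_of_lt (le_max_left _ _) hx)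
    have h2 := hcoer x h1
    have hR₀pos : (0:ℝ) < R₀ := lt_of_lt_of_le one_pos (le_max_left _ _)
    have h3 : g x₀ ≤ g 0 := hx₀ (by
      simp only [Metric.mem_closedBall, dist_zero_right, norm_zero]
      exact le_of_lt hR₀pos)
    have h4 : (2*B + |g 0| + 1) * 2 / σ ≤ R₀ := le_max_right _ _
    have h5 : (2*B + |g 0| + 1) * 2 ≤ σ * R₀ := by
      rw [div_le_iff₀ hσ] at h4; linarith
    have h6 : g 0 ≤ |g 0| := le_abs_self _
    have hRx : R₀ < ‖x‖ := hx
    -- g x ≥ σ/2 ‖x‖² - 2B‖x‖ = ‖x‖(σ‖x‖/2 - 2B) ≥ ‖x‖(|g0|+1) ≥ |g0|+1 > g0 ≥ g x₀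
    have hR₀pos : (0:ℝ) < R₀ := lt_of_lt_of_le one_pos (le_max_left _ _)
    have h7 : σ * R₀ ≤ σ * ‖x‖ := by nlinarith
    have h8 : 4*B + 2*|g 0| + 2 ≤ σ * ‖x‖ := by linarith
    have hxnn : (0:ℝ) ≤ ‖x‖ := le_trans zero_le_one h1
    have P1 := mul_le_mul_of_nonneg_left h8 hxnn
    have P2 := mul_le_mul_of_nonneg_right h1 (by positivity : (0:ℝ) ≤ |g 0| + 1)
    nlinarith [P1, P2]


end Aux

set_option maxHeartbeats 1000000

/-- Lemma 2 of the paper: for a continuously differentiable, `σ`-strongly convex cost `f`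
and linear constraints given by `A, a`, (i) the Lagrangian `x ↦ f x + ⟨μ, A x - a⟩`
has a unique global minimizer `x*(μ)` for each `μ`, and (ii) the dual function
`Ψ μ = inf_x (f x + ⟨μ, A x - a⟩)` is differentiable with gradient `A x*(μ) - a`. -/
theorem stmt_5 (n m : ℕ) (σ : ℝ) (hσ : 0 < σ)
    (f : EuclideanSpace ℝ (Fin n) → ℝ) (hf : ContDiff ℝ 1 f)
    (hsc : ConvexOn ℝ Set.univ (fun x => f x - σ / 2 * ‖x‖ ^ 2))
    (A : Matrix (Fin m) (Fin n) ℝ) (a : EuclideanSpace ℝ (Fin m))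
    (Lag : EuclideanSpace ℝ (Fin n) → EuclideanSpace ℝ (Fin m) → ℝ)
    (hLag : ∀ x μ, Lag x μ = f x + @inner ℝ _ _ μ (toEuc m (A.mulVec x) - a))
    (Ψ : EuclideanSpace ℝ (Fin m) → ℝ)
    (hΨ : ∀ μ, Ψ μ = ⨅ x : EuclideanSpace ℝ (Fin n), Lag x μ) :
    ∃ xstar : EuclideanSpace ℝ (Fin m) → EuclideanSpace ℝ (Fin n),
      (∀ μ, (∀ x, Lag (xstar μ) μ ≤ Lag x μ) ∧
            (∀ x', (∀ x, Lag x' μ ≤ Lag x μ) → x' = xstar μ)) ∧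
      (∀ μ, HasGradientAt Ψ (toEuc m (A.mulVec (xstar μ)) - a) μ) := by
  classical


  set T : EuclideanSpace ℝ (Fin n) →L[ℝ] EuclideanSpace ℝ (Fin m) := LinearMap.toContinuousLinearMap (Matrix.toEuclideanLin A) with hTdef
  have hT : ∀ x : EuclideanSpace ℝ (Fin n), T x = toEuc m (A.mulVec x) := fun x => rfl
  clear_value T
  have hLag' : ∀ (x : EuclideanSpace ℝ (Fin n)) (μ : EuclideanSpace ℝ (Fin m)), Lag x μ = f x + ⟪μ, T x - a⟫ := by
    intro x μ; rw [hLag, hT]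
  -- strong convexity in x for each μ
  have hconv : ∀ μ : EuclideanSpace ℝ (Fin m), ConvexOn ℝ Set.univ (fun x : EuclideanSpace ℝ (Fin n) => Lag x μ - σ/2*‖x‖^2) := by
    intro μ
    have haff : ConvexOn ℝ Set.univ (fun x : EuclideanSpace ℝ (Fin n) => ⟪μ, T x - a⟫) := by
      refine ⟨convex_univ, fun x _ y _ p q hp hq hpq => le_of_eq ?_⟩
      simp only [map_add, map_smul, inner_sub_right, inner_add_right, inner_smul_right,
        smul_eq_mul]
      linear_combination (⟪μ, a⟫ : ℝ) * hpq
    have heq : (fun x : EuclideanSpace ℝ (Fin n) => Lag x μ - σ/2*‖x‖^2)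
        = fun x : EuclideanSpace ℝ (Fin n) => (f x - σ/2*‖x‖^2) + ⟪μ, T x - a⟫ := by
      funext x; rw [hLag']; ring
    rw [heq]
    exact hsc.add haff
  -- continuity in x for each μ
  have hcont : ∀ μ : EuclideanSpace ℝ (Fin m), Continuous (fun x : EuclideanSpace ℝ (Fin n) => Lag x μ) := by
    intro μ
    have heq : (fun x : EuclideanSpace ℝ (Fin n) => Lag x μ) = fun x : EuclideanSpace ℝ (Fin n) => f x + ⟪μ, T x - a⟫ := by
      funext x; rw [hLag']
    rw [heq]
    exact hf.continuous.add (Continuous.inner continuous_const (T.continuous.sub continuous_const))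
  have main : ∀ μ : EuclideanSpace ℝ (Fin m), ∃ x₀ : EuclideanSpace ℝ (Fin n), ∀ x, Lag x₀ μ ≤ Lag x μ := fun μ =>
    aux_exists hσ (hcont μ) (hconv μ)
  choose xstar hxstar using main
  have hgrow : ∀ (μ : EuclideanSpace ℝ (Fin m)) (x : EuclideanSpace ℝ (Fin n)),
      Lag (xstar μ) μ + σ/2*‖x - xstar μ‖^2 ≤ Lag x μ := fun μ =>
    aux_growth hσ (hconv μ) (hxstar μ)
  refine ⟨xstar, fun μ => ⟨hxstar μ, fun x' hx' => ?_⟩, ?_⟩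
  · -- uniqueness
    have h1 := hgrow μ x'
    have h2 := hx' (xstar μ)
    have h3 : ‖x' - xstar μ‖^2 ≤ 0 := by nlinarith
    have h4 : ‖x' - xstar μ‖ = 0 := by nlinarith [norm_nonneg (x' - xstar μ)]
    rw [norm_eq_zero, sub_eq_zero] at h4
    exact h4
  -- gradient
  intro μ
  have hΨeq : ∀ ν : EuclideanSpace ℝ (Fin m), Ψ ν = Lag (xstar ν) ν := by
    intro ν
    rw [hΨ]
    refine le_antisymm (ciInf_le ⟨Lag (xstar ν) ν, ?_⟩ (xstar ν)) (le_ciInf (hxstar ν))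
    rintro y ⟨x, rfl⟩
    exact hxstar ν x
  have hdiff : ∀ (x : EuclideanSpace ℝ (Fin n)) (ν : EuclideanSpace ℝ (Fin m)), Lag x ν = Lag x μ + ⟪ν - μ, T x - a⟫ := by
    intro x ν
    rw [hLag' x ν, hLag' x μ, inner_sub_left]
    ring
  set K : ℝ := ‖T‖ * (‖T‖ / σ) + 1 with hK
  have hKpos : 0 < K := by positivity
  have hLip : ∀ ν : EuclideanSpace ℝ (Fin m), ‖xstar ν - xstar μ‖ ≤ ‖T‖/σ * ‖ν - μ‖ := by
    intro ν
    have G1 := hgrow μ (xstar ν)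
    have G2 := hgrow ν (xstar μ)
    rw [hdiff (xstar μ) ν] at G2
    rw [show Lag (xstar ν) μ = Lag (xstar ν) ν - ⟪ν - μ, T (xstar ν) - a⟫ by
      rw [hdiff (xstar ν) ν]; ring] at G1
    have hkey : σ * ‖xstar ν - xstar μ‖^2 ≤ ⟪ν - μ, T (xstar μ) - T (xstar ν)⟫ := by
      have e : (⟪ν - μ, T (xstar μ) - a⟫ : ℝ) - ⟪ν - μ, T (xstar ν) - a⟫
          = ⟪ν - μ, T (xstar μ) - T (xstar ν)⟫ := by
        simp only [inner_sub_right]; ring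
      have hn1 : ‖xstar μ - xstar ν‖ = ‖xstar ν - xstar μ‖ := norm_sub_rev _ _
      rw [hn1] at G2
      linarith [G1, G2, e]
    have hb : (⟪ν - μ, T (xstar μ) - T (xstar ν)⟫ : ℝ)
        ≤ ‖ν - μ‖ * (‖T‖ * ‖xstar ν - xstar μ‖) := by
      calc (⟪ν - μ, T (xstar μ) - T (xstar ν)⟫ : ℝ)
          ≤ ‖ν - μ‖ * ‖T (xstar μ) - T (xstar ν)‖ := real_inner_le_norm _ _
        _ ≤ ‖ν - μ‖ * (‖T‖ * ‖xstar ν - xstar μ‖) := by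
            rw [← map_sub]
            refine mul_le_mul_of_nonneg_left ?_ (norm_nonneg _)
            rw [show ‖xstar ν - xstar μ‖ = ‖xstar μ - xstar ν‖ from norm_sub_rev _ _]
            exact T.le_opNorm _
    rcases eq_or_lt_of_le (norm_nonneg (xstar ν - xstar μ)) with h0 | h0
    · rw [← h0]; positivity
    · rw [div_mul_eq_mul_div, le_div_iff₀ hσ]
      nlinarith [hkey, hb, mul_pos h0 h0]
  -- remainder bound
  have hrem : ∀ ν : EuclideanSpace ℝ (Fin m), |Ψ ν - Ψ μ - ⟪T (xstar μ) - a, ν - μ⟫| ≤ K * (‖ν - μ‖ * ‖ν - μ‖) := by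
    intro ν
    have hcomm : (⟪T (xstar μ) - a, ν - μ⟫ : ℝ) = ⟪ν - μ, T (xstar μ) - a⟫ :=
      real_inner_comm _ _
    have hup : Ψ ν ≤ Ψ μ + ⟪ν - μ, T (xstar μ) - a⟫ := by
      rw [hΨeq ν, hΨeq μ, ← hdiff (xstar μ) ν]
      exact hxstar ν (xstar μ)
    have hlo : Ψ μ + ⟪ν - μ, T (xstar ν) - a⟫ ≤ Ψ ν := by
      rw [hΨeq ν, hΨeq μ, hdiff (xstar ν) ν]
      exact add_le_add_left (hxstar μ (xstar ν)) _
    have hb2 : |(⟪ν - μ, T (xstar ν) - a⟫ : ℝ) - ⟪ν - μ, T (xstar μ) - a⟫|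
        ≤ K * (‖ν - μ‖ * ‖ν - μ‖) := by
      have e : (⟪ν - μ, T (xstar ν) - a⟫ : ℝ) - ⟪ν - μ, T (xstar μ) - a⟫
          = ⟪ν - μ, T (xstar ν) - T (xstar μ)⟫ := by
        simp only [inner_sub_right]; ring
      rw [e]
      calc |(⟪ν - μ, T (xstar ν) - T (xstar μ)⟫ : ℝ)|
          ≤ ‖ν - μ‖ * ‖T (xstar ν) - T (xstar μ)‖ := abs_real_inner_le_norm _ _
        _ ≤ K * (‖ν - μ‖ * ‖ν - μ‖) := by
            rw [← map_sub]
            have h1 : ‖T (xstar ν - xstar μ)‖ ≤ ‖T‖ * ‖xstar ν - xstar μ‖ := T.le_opNorm _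
            have h2 := hLip ν
            have h3 : ‖T‖ * ‖xstar ν - xstar μ‖ ≤ ‖T‖ * (‖T‖/σ * ‖ν - μ‖) :=
              mul_le_mul_of_nonneg_left h2 (norm_nonneg _)
            rw [hK]
            nlinarith [norm_nonneg (ν - μ), norm_nonneg (T (xstar ν - xstar μ)),
              mul_le_mul_of_nonneg_left (h1.trans h3) (norm_nonneg (ν - μ)),
              sq_nonneg ‖ν - μ‖, norm_nonneg T]
    rw [hcomm, abs_le]
    rw [abs_le] at hb2
    constructor <;> nlinarith [hb2.1, hb2.2, hup, hlo]
  -- conclude HasGradientAt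
  have hgradvec : toEuc m (A.mulVec (xstar μ)) - a = T (xstar μ) - a := by rw [hT]
  rw [hgradvec, hasGradientAt_iff_isLittleO]
  refine Asymptotics.isLittleO_iff.2 fun c hc => ?_
  have hδ : 0 < c / K := div_pos hc hKpos
  filter_upwards [Metric.ball_mem_nhds μ hδ] with ν hν
  rw [Metric.mem_ball, dist_eq_norm] at hν
  have h1 := hrem ν
  have h2 : K * ‖ν - μ‖ ≤ c := by
    have h3 := mul_lt_mul_of_pos_left hν hKpos
    rw [mul_div_cancel₀ c hKpos.ne'] at h3
    exact le_of_lt h3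
  rw [Real.norm_eq_abs]
  calc |Ψ ν - Ψ μ - ⟪T (xstar μ) - a, ν - μ⟫| ≤ K * (‖ν - μ‖ * ‖ν - μ‖) := h1
    _ = (K * ‖ν - μ‖) * ‖ν - μ‖ := by ring
    _ ≤ c * ‖ν - μ‖ := mul_le_mul_of_nonneg_right h2 (norm_nonneg _)
end

section
/- Let f : EuclideanSpace ℝ (Fin n) → ℝ be continuously differentiable and σ-strongly convex with σ > 0, let A be an m × n real matrix and a ∈ EuclideanSpace ℝ (Fin m), and for each μ let x*(μ) denote the unique global minimizer of x ↦ f(x) + ⟨μ, A.mulVec x − a⟩. Then the map μ ↦ x*(μ) is Lipschitz with constant ‖A‖/σ, and consequently the gradient of the dual function, μ ↦ A.mulVec (x*(μ)) − a, is Lipschitz with constant ‖A‖²/σ, where ‖A‖ denotes the operator norm of the linear map x ↦ A.mulVec x between Euclidean spaces. -/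
set_option maxHeartbeats 1000000 in
/-- For a continuously differentiable, `σ`-strongly convex cost `f` with linear constraints
`A, a`, the Lagrangian minimizer map `μ ↦ x*(μ)` is Lipschitz with constant `‖A‖ / σ`, and
hence the dual gradient `μ ↦ A x*(μ) - a` is Lipschitz with constant `‖A‖² / σ`, where
`‖A‖` is the operator norm of `x ↦ A.mulVec x` between Euclidean spaces. -/
theorem stmt_7 (n m : ℕ) (σ : ℝ) (hσ : 0 < σ)
    (f : EuclideanSpace ℝ (Fin n) → ℝ) (hf : ContDiff ℝ 1 f)
    (hsc : ConvexOn ℝ Set.univ (fun x => f x - σ / 2 * ‖x‖ ^ 2))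
    (A : Matrix (Fin m) (Fin n) ℝ) (a : EuclideanSpace ℝ (Fin m))
    (Lag : EuclideanSpace ℝ (Fin n) → EuclideanSpace ℝ (Fin m) → ℝ)
    (hLag : ∀ x μ, Lag x μ = f x + @inner ℝ _ _ μ (toEuc m (A.mulVec x) - a))
    (xstar : EuclideanSpace ℝ (Fin m) → EuclideanSpace ℝ (Fin n))
    (hxstar : ∀ μ, ∀ x, Lag (xstar μ) μ ≤ Lag x μ)
    (nA : ℝ) (hnA : nA = ‖LinearMap.toContinuousLinearMap (Matrix.toEuclideanLin A)‖) :
    LipschitzWith (Real.toNNReal (nA / σ)) xstar ∧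
    LipschitzWith (Real.toNNReal (nA ^ 2 / σ))
      (fun μ => toEuc m (A.mulVec (xstar μ)) - a) := by
  set T := LinearMap.toContinuousLinearMap (Matrix.toEuclideanLin A) with hT
  have hTapp : ∀ x : EuclideanSpace ℝ (Fin n), toEuc m (A.mulVec x) = T x := fun _ => rfl
  have hnA0 : 0 ≤ nA := hnA ▸ norm_nonneg _
  -- norm identity
  have hid : ∀ (x y : EuclideanSpace ℝ (Fin n)) (t : ℝ),
      t * ‖x‖^2 + (1-t) * ‖y‖^2 - ‖t•x + (1-t)•y‖^2 = t*(1-t)*‖x-y‖^2 := by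
    intro x y t
    have h1 : ‖t•x + (1-t)•y‖^2 = @inner ℝ _ _ (t•x + (1-t)•y) (t•x + (1-t)•y) :=
      (real_inner_self_eq_norm_sq _).symm
    have h2 : ‖x-y‖^2 = @inner ℝ _ _ (x-y) (x-y) := (real_inner_self_eq_norm_sq _).symm
    have hx : ‖x‖^2 = @inner ℝ _ _ x x := (real_inner_self_eq_norm_sq _).symm
    have hy : ‖y‖^2 = @inner ℝ _ _ y y := (real_inner_self_eq_norm_sq _).symm
    simp only [h1, h2, hx, hy, inner_add_add_self, inner_sub_sub_self,
      real_inner_smul_left, real_inner_smul_right]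
    ring
  -- strong convexity combination inequality for Lag
  have key : ∀ (μ : EuclideanSpace ℝ (Fin m)) (x y : EuclideanSpace ℝ (Fin n)) (t : ℝ),
      0 ≤ t → t ≤ 1 →
      Lag (t•x + (1-t)•y) μ ≤ t * Lag x μ + (1-t) * Lag y μ - σ/2 * (t*(1-t)*‖x-y‖^2) := by
    intro μ x y t ht ht1
    have hcc := hsc.2 (Set.mem_univ x) (Set.mem_univ y) (show (0:ℝ) ≤ t from ht)
      (show (0:ℝ) ≤ 1 - t by linarith) (show t + (1 - t) = 1 by ring)
    simp only [smul_eq_mul] at hcc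
    have hlin : @inner ℝ _ _ μ (toEuc m (A.mulVec ((t•x + (1-t)•y : EuclideanSpace ℝ (Fin n)))) - a)
        = t * @inner ℝ _ _ μ (toEuc m (A.mulVec x) - a)
          + (1-t) * @inner ℝ _ _ μ (toEuc m (A.mulVec y) - a) := by
      simp only [hTapp]
      have h5 : T (t•x + (1-t)•y) - a = t • (T x - a) + (1-t) • (T y - a) := by
        rw [map_add, map_smul, map_smul]
        have : (a : EuclideanSpace ℝ (Fin m)) = t • a + (1-t) • a := by
          rw [← add_smul, show t + (1-t) = 1 by ring, one_smul]
        nth_rewrite 1 [this]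
        abel_nf
        module
      rw [h5, inner_add_right, real_inner_smul_right, real_inner_smul_right]
    have hnid := hid x y t
    have h4 : σ/2 * (t * ‖x‖^2 + (1-t) * ‖y‖^2 - ‖t•x + (1-t)•y‖^2)
        = σ/2 * (t*(1-t)*‖x-y‖^2) := by rw [hnid]
    rw [hLag, hLag, hLag, hlin]
    nlinarith [hcc, h4]
  -- minimizer inequality
  have hmin : ∀ (μ : EuclideanSpace ℝ (Fin m)) (x : EuclideanSpace ℝ (Fin n)),
      Lag (xstar μ) μ + σ/2 * ‖x - xstar μ‖^2 ≤ Lag x μ := by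
    intro μ x
    set x₁ := xstar μ with hx₁
    have step : ∀ t : ℝ, 0 < t → t ≤ 1 →
        σ/2 * ((1-t) * ‖x - x₁‖^2) ≤ Lag x μ - Lag x₁ μ := by
      intro t ht ht1
      have h1 : Lag x₁ μ ≤ Lag (t•x + (1-t)•x₁) μ := hxstar μ _
      have h2 := key μ x x₁ t ht.le ht1
      have h3 : t * (σ/2 * ((1-t) * ‖x - x₁‖^2)) ≤ t * (Lag x μ - Lag x₁ μ) := by
        nlinarith [h1, h2]
      exact le_of_mul_le_mul_left h3 ht
    have lim : Filter.Tendsto (fun k : ℕ => σ/2 * ((1 - 1/((k:ℝ)+1)) * ‖x - x₁‖^2))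
        Filter.atTop (nhds (σ/2 * ((1 - 0) * ‖x - x₁‖^2))) := by
      apply Filter.Tendsto.const_mul
      apply Filter.Tendsto.mul_const
      exact (tendsto_one_div_add_atTop_nhds_zero_nat).const_sub 1
    have hle : ∀ k : ℕ, σ/2 * ((1 - 1/((k:ℝ)+1)) * ‖x - x₁‖^2) ≤ Lag x μ - Lag x₁ μ := by
      intro k
      refine step _ (by positivity) ?_
      rw [div_le_one (by positivity)]
      linarith [Nat.cast_nonneg (α := ℝ) k]
    have hfin := le_of_tendsto lim (Filter.Eventually.of_forall hle)
    simp only [sub_zero, one_mul] at hfin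
    linarith
  -- main pairwise bound on minimizers
  have hxlip : ∀ μ₁ μ₂, ‖xstar μ₂ - xstar μ₁‖ ≤ nA / σ * ‖μ₂ - μ₁‖ := by
    intro μ₁ μ₂
    set x₁ := xstar μ₁
    set x₂ := xstar μ₂
    have h1 := hmin μ₁ x₂
    have h2 := hmin μ₂ x₁
    have hxx : ‖x₁ - x₂‖ = ‖x₂ - x₁‖ := norm_sub_rev _ _
    rw [hxx] at h2
    have hsum : σ * ‖x₂ - x₁‖^2 ≤ @inner ℝ _ _ (μ₁ - μ₂) (T x₂ - T x₁) := by
      have e1 : Lag x₂ μ₁ - Lag x₂ μ₂ = @inner ℝ _ _ (μ₁ - μ₂) (T x₂ - a) := by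
        rw [hLag, hLag, hTapp, inner_sub_left]; ring
      have e2 : Lag x₁ μ₂ - Lag x₁ μ₁ = - @inner ℝ _ _ (μ₁ - μ₂) (T x₁ - a) := by
        rw [hLag, hLag, hTapp, inner_sub_left]; ring
      have e3 : @inner ℝ _ _ (μ₁ - μ₂) (T x₂ - a) - @inner ℝ _ _ (μ₁ - μ₂) (T x₁ - a)
          = @inner ℝ _ _ (μ₁ - μ₂) (T x₂ - T x₁) := by
        rw [← inner_sub_right]; congr 1; abel
      nlinarith [h1, h2]
    have hcs : @inner ℝ _ _ (μ₁ - μ₂) (T x₂ - T x₁) ≤ ‖μ₁ - μ₂‖ * ‖T x₂ - T x₁‖ :=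
      real_inner_le_norm _ _
    have hTn : ‖T x₂ - T x₁‖ ≤ nA * ‖x₂ - x₁‖ := by
      rw [← map_sub, hnA]; exact T.le_opNorm _
    have hμ : ‖μ₁ - μ₂‖ = ‖μ₂ - μ₁‖ := norm_sub_rev _ _
    have hbig : σ * ‖x₂ - x₁‖^2 ≤ nA * ‖μ₂ - μ₁‖ * ‖x₂ - x₁‖ := by
      calc σ * ‖x₂ - x₁‖^2 ≤ @inner ℝ _ _ (μ₁ - μ₂) (T x₂ - T x₁) := hsum
      _ ≤ ‖μ₁ - μ₂‖ * ‖T x₂ - T x₁‖ := hcs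
      _ ≤ ‖μ₂ - μ₁‖ * (nA * ‖x₂ - x₁‖) := by
          rw [hμ]; exact mul_le_mul_of_nonneg_left hTn (norm_nonneg _)
      _ = nA * ‖μ₂ - μ₁‖ * ‖x₂ - x₁‖ := by ring
    rcases eq_or_lt_of_le (norm_nonneg (x₂ - x₁)) with h0 | h0
    · rw [← h0]; positivity
    · rw [div_mul_eq_mul_div, le_div_iff₀ hσ]
      nlinarith [hbig, h0]
  constructor
  · refine LipschitzWith.of_dist_le_mul fun μ₂ μ₁ => ?_
    rw [Real.coe_toNNReal _ (by positivity), dist_eq_norm, dist_eq_norm]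
    exact hxlip μ₁ μ₂
  · refine LipschitzWith.of_dist_le_mul fun μ₂ μ₁ => ?_
    rw [Real.coe_toNNReal _ (by positivity), dist_eq_norm, dist_eq_norm]
    have heq : (toEuc m (A.mulVec (xstar μ₂)) - a) - (toEuc m (A.mulVec (xstar μ₁)) - a)
        = T (xstar μ₂ - xstar μ₁) := by
      simp only [hTapp, map_sub]; abel
    rw [heq]
    calc ‖T (xstar μ₂ - xstar μ₁)‖ ≤ nA * ‖xstar μ₂ - xstar μ₁‖ := by
          rw [hnA]; exact T.le_opNorm _
    _ ≤ nA * (nA / σ * ‖μ₂ - μ₁‖) := mul_le_mul_of_nonneg_left (hxlip μ₁ μ₂) hnA0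
    _ = nA^2 / σ * ‖μ₂ - μ₁‖ := by ring
end

section
/- Let f : EuclideanSpace ℝ (Fin n) → ℝ be continuously differentiable and σ-strongly convex with σ > 0, let A be an m × n real matrix and a ∈ EuclideanSpace ℝ (Fin m), and assume the Slater condition: there exists x̄ with (A.mulVec x̄) i < a i for every i. Suppose μ* ≥ 0 (componentwise) maximizes the dual function Ψ(μ) = inf over x of (f(x) + ⟨μ, A.mulVec x − a⟩) over the nonnegative orthant. Then the unique minimizer x*(μ*) of x ↦ f(x) + ⟨μ*, A.mulVec x − a⟩ is the unique global minimizer of f over the feasible set {x : (A.mulVec x) i ≤ a i for all i}. -/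
/-- Primal recovery (equation (28) of the paper): under the Slater condition, if `μ* ≥ 0`
maximizes the dual function `Ψ(μ) = inf_x (f x + ⟨μ, A x - a⟩)` over the nonnegative
orthant, then the unique minimizer `x*(μ*)` of the Lagrangian at `μ*` is the unique global
minimizer of the strongly convex cost `f` over the feasible set `{x : A x ≤ a}`. -/
theorem stmt_12 (n m : ℕ) (σ : ℝ) (hσ : 0 < σ)
    (f : EuclideanSpace ℝ (Fin n) → ℝ) (hf : ContDiff ℝ 1 f)
    (hsc : ConvexOn ℝ Set.univ (fun x => f x - σ / 2 * ‖x‖ ^ 2))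
    (A : Matrix (Fin m) (Fin n) ℝ) (a : EuclideanSpace ℝ (Fin m))
    (hslater : ∃ xbar : EuclideanSpace ℝ (Fin n), ∀ i, A.mulVec xbar i < a i)
    (Lag : EuclideanSpace ℝ (Fin n) → EuclideanSpace ℝ (Fin m) → ℝ)
    (hLag : ∀ x μ, Lag x μ = f x + @inner ℝ _ _ μ (toEuc m (A.mulVec x) - a))
    (Ψ : EuclideanSpace ℝ (Fin m) → ℝ)
    (hΨ : ∀ μ, Ψ μ = ⨅ x : EuclideanSpace ℝ (Fin n), Lag x μ)
    (μstar : EuclideanSpace ℝ (Fin m)) (hμstar0 : ∀ i, 0 ≤ μstar i)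
    (hμstarmax : ∀ μ : EuclideanSpace ℝ (Fin m), (∀ i, 0 ≤ μ i) → Ψ μ ≤ Ψ μstar)
    (xstar : EuclideanSpace ℝ (Fin n))
    (hxstarmin : ∀ x, Lag xstar μstar ≤ Lag x μstar)
    (hxstaruniq : ∀ x', (∀ x, Lag x' μstar ≤ Lag x μstar) → x' = xstar) :
    (∀ i, A.mulVec xstar i ≤ a i) ∧
    (∀ x : EuclideanSpace ℝ (Fin n), (∀ i, A.mulVec x i ≤ a i) → f xstar ≤ f x) ∧
    (∀ x' : EuclideanSpace ℝ (Fin n), (∀ i, A.mulVec x' i ≤ a i) →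
      (∀ x : EuclideanSpace ℝ (Fin n), (∀ i, A.mulVec x i ≤ a i) → f x' ≤ f x) →
      x' = xstar) := by
  clear hf hslater hxstaruniq
  -- inner product of μstar with a shifted vector, as an explicit sum
  have hinner : ∀ w : Fin m → ℝ,
      @inner ℝ _ _ μstar (toEuc m w - a) = ∑ j, μstar j * (w j - a j) := by
    intro w
    simp only [PiLp.inner_apply, RCLike.inner_apply, conj_trivial, PiLp.sub_apply]
    exact Finset.sum_congr rfl fun i _ => mul_comm _ _
  -- the linear term of the Lagrangian is affine
  have hlin : ∀ (p q : ℝ) (x y : EuclideanSpace ℝ (Fin n)), p + q = 1 →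
      @inner ℝ _ _ μstar (toEuc m (A.mulVec (p•x + q•y)) - a)
        = p * @inner ℝ _ _ μstar (toEuc m (A.mulVec x) - a)
          + q * @inner ℝ _ _ μstar (toEuc m (A.mulVec y) - a) := by
    intro p q x y hpq
    have hmv : ∀ i, A.mulVec (p•x + q•y) i = p * A.mulVec x i + q * A.mulVec y i := by
      intro i
      simp only [Matrix.mulVec, dotProduct, PiLp.add_apply, PiLp.smul_apply, Pi.add_apply, Pi.smul_apply, smul_eq_mul,
        Finset.mul_sum, ← Finset.sum_add_distrib]
      exact Finset.sum_congr rfl fun k _ => by ring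
    rw [hinner, hinner, hinner]
    simp only [Finset.mul_sum, ← Finset.sum_add_distrib]
    refine Finset.sum_congr rfl fun i _ => ?_
    rw [hmv i]
    linear_combination (μstar i * a i) * hpq
  have hlconv : ConvexOn ℝ Set.univ
      (fun x : EuclideanSpace ℝ (Fin n) => @inner ℝ _ _ μstar (toEuc m (A.mulVec x) - a)) :=
    ⟨convex_univ, fun x _ y _ p q hp hq hpq => le_of_eq (by
      simp only [smul_eq_mul]; exact hlin p q x y hpq)⟩
  -- strong convexity of the Lagrangian at μstar
  have hGconv : ConvexOn ℝ Set.univ (fun x => Lag x μstar - σ / 2 * ‖x‖ ^ 2) := by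
    have h := hsc.add hlconv
    have heq : ((fun x => f x - σ / 2 * ‖x‖ ^ 2)
        + fun x : EuclideanSpace ℝ (Fin n) => @inner ℝ _ _ μstar (toEuc m (A.mulVec x) - a))
        = fun x => Lag x μstar - σ / 2 * ‖x‖ ^ 2 := by
      funext x
      simp only [Pi.add_apply, hLag]
      ring
    rwa [heq] at h
  have hSG : StrongConvexOn Set.univ σ (fun x => Lag x μstar) :=
    strongConvexOn_iff_convex.mpr hGconv
  -- quadratic growth around the minimizer
  have growth : ∀ x, Lag xstar μstar + σ/2 * ‖x - xstar‖^2 ≤ Lag x μstar := by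
    intro v
    have hκ0 : 0 ≤ σ/2 * ‖v - xstar‖^2 := by positivity
    have hstep : ∀ s : ℝ, 0 < s → s ≤ 1/2 →
        (1-s) * (σ/2 * ‖v - xstar‖^2) ≤ Lag v μstar - Lag xstar μstar := by
      intro s hs0 hs1
      have h1 := hSG.2 (Set.mem_univ v) (Set.mem_univ xstar) hs0.le
        (by linarith : (0:ℝ) ≤ 1 - s) (by ring : s + (1-s) = 1)
      have h2 := hxstarmin (s • v + (1-s) • xstar)
      simp only [smul_eq_mul] at h1
      have h3 : s * ((1-s) * (σ/2 * ‖v - xstar‖^2))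
          ≤ s * (Lag v μstar - Lag xstar μstar) := by nlinarith [h1, h2]
      exact le_of_mul_le_mul_left h3 hs0
    have hfin : σ/2 * ‖v - xstar‖^2 ≤ Lag v μstar - Lag xstar μstar := by
      refine le_of_forall_pos_le_add fun ε hε => ?_
      have hq0 : (0:ℝ) < ε / (σ/2 * ‖v - xstar‖^2 + 1) := by positivity
      have hs0 : 0 < min (1/2) (ε / (σ/2 * ‖v - xstar‖^2 + 1)) := lt_min (by norm_num) hq0
      have h := hstep _ hs0 (min_le_left _ _)
      have h2 : min (1/2) (ε / (σ/2 * ‖v - xstar‖^2 + 1))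
          ≤ ε / (σ/2 * ‖v - xstar‖^2 + 1) := min_le_right _ _
      have h3 : ε / (σ/2 * ‖v - xstar‖^2 + 1) * (σ/2 * ‖v - xstar‖^2 + 1) = ε :=
        div_mul_cancel₀ ε (by positivity)
      nlinarith [hκ0, hq0.le, h, h2, h3]
    linarith
  -- Ψ μstar is at most the Lagrangian value at xstar
  have hΨlag : Ψ μstar ≤ Lag xstar μstar := by
    rw [hΨ]
    exact ciInf_le ⟨Lag xstar μstar, by rintro y ⟨x, rfl⟩; exact hxstarmin x⟩ xstar
  -- key dual perturbation inequality
  have hC : ∀ (j : Fin m) (t : ℝ),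
      (∀ i, 0 ≤ μstar i + (EuclideanSpace.single j t : EuclideanSpace ℝ (Fin m)) i) →
      t * (A.mulVec xstar j - a j) ≤ t^2 * ‖toEuc n (A j)‖^2 / (2*σ) := by
    intro j t hnn
    set c : ℝ := ‖toEuc n (A j)‖ with hc
    set μt : EuclideanSpace ℝ (Fin m) := μstar + EuclideanSpace.single j t with hμt
    have hnn' : ∀ i, 0 ≤ μt i := by
      intro i; simpa [hμt, PiLp.add_apply] using hnn i
    have hlb : ∀ x, Lag xstar μstar + (t * (A.mulVec xstar j - a j) - t^2 * c^2/(2*σ))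
        ≤ Lag x μt := by
      intro x
      have h1 : Lag x μt = Lag x μstar + t * (A.mulVec x j - a j) := by
        rw [hLag, hLag, hμt, inner_add_left, EuclideanSpace.inner_single_left]
        simp only [conj_trivial, PiLp.sub_apply]
        have : (toEuc m (A.mulVec x)) j = A.mulVec x j := by simp [toEuc]
        rw [this]
        ring
      have h2 : A.mulVec x j - A.mulVec xstar j = @inner ℝ _ _ (toEuc n (A j)) (x - xstar) := by
        simp only [PiLp.inner_apply, RCLike.inner_apply, conj_trivial, PiLp.sub_apply]
        have : ∀ z : EuclideanSpace ℝ (Fin n), A.mulVec z j = ∑ k, A j k * z k := fun z => rfl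
        rw [this, this, ← Finset.sum_sub_distrib]
        exact Finset.sum_congr rfl fun k _ => by
          have : (toEuc n (A j)) k = A j k := by simp [toEuc]
          rw [this]; ring
      have h2' : t * (A.mulVec x j - a j) = t * (A.mulVec xstar j - a j)
          + t * @inner ℝ _ _ (toEuc n (A j)) (x - xstar) := by linear_combination t * h2
      have h3 : -( |t| * (c * ‖x - xstar‖)) ≤ t * @inner ℝ _ _ (toEuc n (A j)) (x - xstar) := by
        have ha := abs_real_inner_le_norm (toEuc n (A j)) (x - xstar)
        have hb := neg_abs_le (t * @inner ℝ _ _ (toEuc n (A j)) (x - xstar))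
        have hm := abs_mul t (@inner ℝ _ _ (toEuc n (A j)) (x - xstar))
        nlinarith [abs_nonneg t, abs_nonneg (@inner ℝ _ _ (toEuc n (A j)) (x - xstar))]
      have h4 := growth x
      have h5 : 0 ≤ σ/2 * ‖x-xstar‖^2 - |t| * (c * ‖x-xstar‖) + t^2*c^2/(2*σ) := by
        have hsq := sq_nonneg (σ * ‖x-xstar‖ - |t| * c)
        have hta := sq_abs t
        have h2σ : (0:ℝ) < 2*σ := by linarith
        have hdiv : t^2*c^2/(2*σ) * (2*σ) = t^2*c^2 := div_mul_cancel₀ _ (ne_of_gt h2σ)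
        nlinarith [hsq, hta, hσ, hdiv]
      linarith
    have hΨt : Lag xstar μstar + (t * (A.mulVec xstar j - a j) - t^2*c^2/(2*σ)) ≤ Ψ μt := by
      rw [hΨ]; exact le_ciInf hlb
    have hmax := hμstarmax μt hnn'
    have heq : t^2 * c^2 / (2*σ) = t^2*c^2/(2*σ) := by ring
    linarith [hΨlag, hΨt, hmax, heq.le, heq.ge]
  -- feasibility
  have hfeas : ∀ j, A.mulVec xstar j ≤ a j := by
    intro j
    set K : ℝ := ‖toEuc n (A j)‖^2/(2*σ) with hK
    have hK0 : 0 ≤ K := by positivity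
    have hub : ∀ t : ℝ, 0 < t → A.mulVec xstar j - a j ≤ t * K := by
      intro t ht
      have h := hC j t (by
        intro i
        rw [EuclideanSpace.single_apply]
        split_ifs <;> [linarith [hμstar0 i]; simpa using hμstar0 i])
      have heq : t^2 * ‖toEuc n (A j)‖^2 / (2*σ) = t * (t*K) := by rw [hK]; ring
      have h' : t * (A.mulVec xstar j - a j) ≤ t * (t * K) := le_of_le_of_eq h heq
      exact le_of_mul_le_mul_left h' ht
    have hd : A.mulVec xstar j - a j ≤ 0 := by
      refine le_of_forall_pos_le_add fun ε hε => ?_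
      have ht : (0:ℝ) < ε/(K+1) := by positivity
      have h := hub _ ht
      have h2 : ε / (K+1) * (K+1) = ε := div_mul_cancel₀ ε (by positivity)
      nlinarith
    linarith
  -- complementary slackness
  have hcs : ∀ j, μstar j * (A.mulVec xstar j - a j) = 0 := by
    intro j
    rcases eq_or_lt_of_le (hμstar0 j) with h0 | hpos
    · rw [← h0, zero_mul]
    · set K : ℝ := ‖toEuc n (A j)‖^2/(2*σ) with hK
      have hK0 : 0 ≤ K := by positivity
      have hge : a j ≤ A.mulVec xstar j := by
        refine le_of_forall_pos_le_add fun ε hε => ?_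
        set t : ℝ := -(min (μstar j) (ε/(K+1))) with ht
        have htneg : t < 0 := by
          rw [ht, neg_lt, neg_zero]; exact lt_min hpos (by positivity)
        have h := hC j t (by
          intro i
          rw [EuclideanSpace.single_apply]
          split_ifs with hij
          · subst hij
            have := min_le_left (μstar i) (ε/(K+1))
            rw [ht]; linarith
          · simpa using hμstar0 i)
        have heq : t^2 * ‖toEuc n (A j)‖^2 / (2*σ) = t * (t*K) := by rw [hK]; ring
        have h' : t * (A.mulVec xstar j - a j) ≤ t * (t * K) := le_of_le_of_eq h heq
        have hdiv : t * K ≤ A.mulVec xstar j - a j := by nlinarith [h', htneg]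
        have hmle : min (μstar j) (ε/(K+1)) ≤ ε/(K+1) := min_le_right _ _
        have hm0 : 0 ≤ min (μstar j) (ε/(K+1)) := le_min hpos.le (by positivity)
        have h2 : ε / (K+1) * (K+1) = ε := div_mul_cancel₀ ε (by positivity)
        have h3 : -ε ≤ t * K := by rw [ht]; nlinarith
        linarith
      have h0 : A.mulVec xstar j - a j = 0 := le_antisymm (by linarith [hfeas j]) (by linarith)
      rw [h0, mul_zero]
  have hS : @inner ℝ _ _ μstar (toEuc m (A.mulVec xstar) - a) = 0 := by
    rw [hinner]
    exact Finset.sum_eq_zero fun j _ => hcs j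
  have hstar : Lag xstar μstar = f xstar := by rw [hLag, hS]; ring
  have hopt : ∀ x : EuclideanSpace ℝ (Fin n), (∀ i, A.mulVec x i ≤ a i) → f xstar + σ/2 * ‖x - xstar‖^2 ≤ f x := by
    intro x hx
    have h1 := growth x
    have h3 : Lag x μstar ≤ f x := by
      rw [hLag]
      have hnp : @inner ℝ _ _ μstar (toEuc m (A.mulVec x) - a) ≤ 0 := by
        rw [hinner]
        exact Finset.sum_nonpos fun j _ =>
          mul_nonpos_of_nonneg_of_nonpos (hμstar0 j) (by linarith [hx j])
      linarith
    rw [hstar] at h1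
    linarith
  refine ⟨hfeas, fun x hx => ?_, fun x' hx' hx'opt => ?_⟩
  · have h0 : 0 ≤ σ/2 * ‖x - xstar‖^2 := by positivity
    linarith [hopt x hx]
  · have h1 := hopt x' hx'
    have h2 := hx'opt xstar hfeas
    have h0 : 0 ≤ σ/2 * ‖x' - xstar‖^2 := by positivity
    have h3 : σ/2 * ‖x' - xstar‖^2 = 0 := le_antisymm (by linarith) h0
    have hne : σ/2 ≠ 0 := by positivity
    have h5 : ‖x' - xstar‖^2 = 0 := (mul_eq_zero.mp h3).resolve_left hne
    have h4 : ‖x' - xstar‖ = 0 := by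
      exact pow_eq_zero_iff (two_ne_zero) |>.mp h5
    exact sub_eq_zero.mp (norm_eq_zero.mp h4)
end

section
/- Let φ_u : EuclideanSpace ℝ (Fin n) → ℝ and φ_v : EuclideanSpace ℝ (Fin p) → ℝ be convex, let Ω_u ⊆ EuclideanSpace ℝ (Fin n) and Ω_v ⊆ EuclideanSpace ℝ (Fin p) be nonempty closed convex sets, let H_u be a q × n real matrix, H_v a q × p real matrix, h ∈ EuclideanSpace ℝ (Fin q), and ρ > 0. Assume there exists a saddle point (u*, v*, λ*) with u* ∈ Ω_u, v* ∈ Ω_v of the Lagrangian L₀(u, v, λ) = φ_u(u) + φ_v(v) + ⟨λ, H_u u + H_v v − h⟩, i.e. L₀(u*, v*, λ) ≤ L₀(u*, v*, λ*) ≤ L₀(u, v, λ*) for all u ∈ Ω_u, v ∈ Ω_v, λ. Let sequences u(s) ∈ Ω_u, v(s) ∈ Ω_v, λ(s) satisfy the ADMM recursions: v(s+1) minimizes v ↦ φ_v(v) + (ρ/2)‖H_u (u(s)) + H_v v − h − (1/ρ)λ(s)‖² over Ω_v; u(s+1) minimizes u ↦ φ_u(u) + (ρ/2)‖H_u u + H_v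 (v(s+1)) − h − (1/ρ)λ(s)‖² over Ω_u; and λ(s+1) = λ(s) − ρ(H_u (u(s+1)) + H_v (v(s+1)) − h). Then the equality-constraint residual converges to zero, ‖H_u (u(s)) + H_v (v(s)) − h‖ → 0 as s → ∞, and the objective values converge to the optimal value, φ_u(u(s)) + φ_v(v(s)) → φ_u(u*) + φ_v(v*). -/
open RealInnerProductSpace Filter

/-- Matrix-vector multiplication as a linear map between Euclidean spaces. -/
def mulVecLinE {q m : ℕ} (M : Matrix (Fin q) (Fin m) ℝ) :
    EuclideanSpace ℝ (Fin m) →ₗ[ℝ] EuclideanSpace ℝ (Fin q) where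
  toFun x := toEuc q (M.mulVec x)
  map_add' x y := by
    ext i
    simp [toEuc, Matrix.mulVec, dotProduct, mul_add, Finset.sum_add_distrib]
  map_smul' c x := by
    ext i
    simp [toEuc, Matrix.mulVec, dotProduct, Finset.mul_sum]
    ring_nf
    simp [mul_comm, mul_assoc, mul_left_comm]

/-- First-order optimality condition for minimizing a convex function plus a
quadratic over a convex set. -/
lemma foc {E F : Type*} [NormedAddCommGroup E] [InnerProductSpace ℝ E]
    [NormedAddCommGroup F] [InnerProductSpace ℝ F]
    (f : E → ℝ) (hf : ConvexOn ℝ Set.univ f) (A : E →ₗ[ℝ] F) (c : F)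
    (ρ : ℝ) (hρ : 0 < ρ) (C : Set E) (hC : Convex ℝ C)
    (x : E) (hx : x ∈ C)
    (hmin : ∀ w ∈ C, f x + ρ / 2 * ‖A x + c‖ ^ 2 ≤ f w + ρ / 2 * ‖A w + c‖ ^ 2) :
    ∀ w ∈ C, 0 ≤ f w - f x + ρ * ⟪A x + c, A w - A x⟫ := by
  intro w hw
  set X : ℝ := f w - f x + ρ * ⟪A x + c, A w - A x⟫ with hX
  set N : ℝ := ρ / 2 * ‖A w - A x‖ ^ 2 with hN
  have hN0 : 0 ≤ N := by positivity
  have key : ∀ t : ℝ, 0 < t → t ≤ 1 → 0 ≤ X + t * N := by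
    intro t ht ht1
    have hxz : (1 - t) • x + t • w = x + t • (w - x) := by module
    have hz : x + t • (w - x) ∈ C := by
      rw [← hxz]
      exact hC hx hw (by linarith : (0:ℝ) ≤ 1 - t) ht.le (by ring)
    have hfz : f (x + t • (w - x)) ≤ (1 - t) * f x + t * f w := by
      have := hf.2 (Set.mem_univ x) (Set.mem_univ w) (by linarith : (0:ℝ) ≤ 1 - t) ht.le (by ring)
      rw [hxz] at this
      simpa [smul_eq_mul] using this
    have hAz : A (x + t • (w - x)) + c = (A x + c) + t • (A w - A x) := by
      simp only [map_add, map_smul, map_sub]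
      abel
    have hnorm : ‖A (x + t • (w - x)) + c‖ ^ 2
        = ‖A x + c‖ ^ 2 + 2 * (t * ⟪A x + c, A w - A x⟫) + t ^ 2 * ‖A w - A x‖ ^ 2 := by
      rw [hAz, norm_add_sq_real, real_inner_smul_right, norm_smul, Real.norm_eq_abs,
        mul_pow, sq_abs]
    have hm := hmin _ hz
    rw [hnorm] at hm
    nlinarith [hm, hfz, mul_pos ht ht]
  by_contra hcon
  push_neg at hcon
  set D : ℝ := (-X) / (2 * N + 2) with hDdef
  have hDpos : 0 < D := div_pos (by linarith) (by linarith)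
  have hD : D * (2 * N + 2) = -X := div_mul_cancel₀ _ (by linarith)
  have ht1 : min 1 D ≤ 1 := min_le_left _ _
  have ht2 : min 1 D ≤ D := min_le_right _ _
  have htpos : 0 < min 1 D := lt_min one_pos hDpos
  have hk := key (min 1 D) htpos ht1
  nlinarith [mul_le_mul_of_nonneg_right ht2 hN0, hk, hD, hDpos, hN0]

lemma two_inner_aux {F : Type*} [NormedAddCommGroup F] [InnerProductSpace ℝ F] (x y : F) :
    2 * ⟪x - y, x⟫ = ‖x‖ ^ 2 - ‖y‖ ^ 2 + ‖x - y‖ ^ 2 := by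
  have h1 : ‖x - y‖ ^ 2 = ‖x‖ ^ 2 - 2 * ⟪x, y⟫ + ‖y‖ ^ 2 := norm_sub_sq_real x y
  have h2 : ⟪x - y, x⟫ = ⟪x, x⟫ - ⟪y, x⟫ := inner_sub_left x y x
  have h3 : ⟪x, x⟫ = ‖x‖ ^ 2 := real_inner_self_eq_norm_sq x
  have h4 : ⟪y, x⟫ = ⟪x, y⟫ := real_inner_comm x y
  linarith

set_option maxHeartbeats 2000000 in
/-- Proposition 5 of the paper (ADMM convergence): if the Lagrangian of the problem
`min φ_u(u) + φ_v(v) s.t. H_u u + H_v v = h, u ∈ Ω_u, v ∈ Ω_v` admits a saddle point,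
then the ADMM iterates drive the equality-constraint residual to zero and the objective
values to the optimal value. -/
theorem stmt_13 (n p q : ℕ) (ρ : ℝ) (hρ : 0 < ρ)
    (φu : EuclideanSpace ℝ (Fin n) → ℝ) (φv : EuclideanSpace ℝ (Fin p) → ℝ)
    (hφu : ConvexOn ℝ Set.univ φu) (hφv : ConvexOn ℝ Set.univ φv)
    (Ωu : Set (EuclideanSpace ℝ (Fin n))) (Ωv : Set (EuclideanSpace ℝ (Fin p)))
    (hΩune : Ωu.Nonempty) (hΩucl : IsClosed Ωu) (hΩucv : Convex ℝ Ωu)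
    (hΩvne : Ωv.Nonempty) (hΩvcl : IsClosed Ωv) (hΩvcv : Convex ℝ Ωv)
    (Hu : Matrix (Fin q) (Fin n) ℝ) (Hv : Matrix (Fin q) (Fin p) ℝ)
    (h : EuclideanSpace ℝ (Fin q))
    (L0 : EuclideanSpace ℝ (Fin n) → EuclideanSpace ℝ (Fin p) →
      EuclideanSpace ℝ (Fin q) → ℝ)
    (hL0 : ∀ u v lam, L0 u v lam =
      φu u + φv v + @inner ℝ _ _ lam (toEuc q (Hu.mulVec u) + toEuc q (Hv.mulVec v) - h))
    (ustar : EuclideanSpace ℝ (Fin n)) (vstar : EuclideanSpace ℝ (Fin p))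
    (lamstar : EuclideanSpace ℝ (Fin q))
    (hustar : ustar ∈ Ωu) (hvstar : vstar ∈ Ωv)
    (hsaddle₁ : ∀ lam : EuclideanSpace ℝ (Fin q), L0 ustar vstar lam ≤ L0 ustar vstar lamstar)
    (hsaddle₂ : ∀ u ∈ Ωu, ∀ v ∈ Ωv, L0 ustar vstar lamstar ≤ L0 u v lamstar)
    (u : ℕ → EuclideanSpace ℝ (Fin n)) (v : ℕ → EuclideanSpace ℝ (Fin p))
    (lam : ℕ → EuclideanSpace ℝ (Fin q))
    (hu : ∀ s, u s ∈ Ωu) (hv : ∀ s, v s ∈ Ωv)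
    (hvupd : ∀ s, ∀ w ∈ Ωv,
      φv (v (s + 1)) + ρ / 2 *
        ‖toEuc q (Hu.mulVec (u s)) + toEuc q (Hv.mulVec (v (s + 1))) - h - (1 / ρ) • lam s‖ ^ 2
      ≤ φv w + ρ / 2 *
        ‖toEuc q (Hu.mulVec (u s)) + toEuc q (Hv.mulVec w) - h - (1 / ρ) • lam s‖ ^ 2)
    (huupd : ∀ s, ∀ w ∈ Ωu,
      φu (u (s + 1)) + ρ / 2 *
        ‖toEuc q (Hu.mulVec (u (s + 1))) + toEuc q (Hv.mulVec (v (s + 1))) - h - (1 / ρ) • lam s‖ ^ 2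
      ≤ φu w + ρ / 2 *
        ‖toEuc q (Hu.mulVec w) + toEuc q (Hv.mulVec (v (s + 1))) - h - (1 / ρ) • lam s‖ ^ 2)
    (hlamupd : ∀ s, lam (s + 1) =
      lam s - ρ • (toEuc q (Hu.mulVec (u (s + 1))) + toEuc q (Hv.mulVec (v (s + 1))) - h)) :
    Filter.Tendsto
      (fun s => ‖toEuc q (Hu.mulVec (u s)) + toEuc q (Hv.mulVec (v s)) - h‖)
      Filter.atTop (nhds 0) ∧
    Filter.Tendsto (fun s => φu (u s) + φv (v s))
      Filter.atTop (nhds (φu ustar + φv vstar)) := by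
  set A : EuclideanSpace ℝ (Fin n) →ₗ[ℝ] EuclideanSpace ℝ (Fin q) := mulVecLinE Hu with hAdef
  set B : EuclideanSpace ℝ (Fin p) →ₗ[ℝ] EuclideanSpace ℝ (Fin q) := mulVecLinE Hv with hBdef
  set r : ℕ → EuclideanSpace ℝ (Fin q) := fun s => A (u s) + B (v s) - h with hrdef
  set W : ℕ → EuclideanSpace ℝ (Fin q) := fun s => -(lam s) - lamstar with hWdef
  set a : ℕ → EuclideanSpace ℝ (Fin q) := fun s => A (u s) - A ustar with hadef
  set d : ℕ → EuclideanSpace ℝ (Fin q) := fun s => A (u (s + 1)) - A (u s) with hddef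
  set V : ℕ → ℝ := fun s => ‖W s‖ ^ 2 + ρ ^ 2 * ‖a s‖ ^ 2 with hVdef
  have hr : ∀ s, r s = A (u s) + B (v s) - h := fun s => rfl
  have hWs : ∀ s, W s = -(lam s) - lamstar := fun s => rfl
  have has : ∀ s, a s = A (u s) - A ustar := fun s => rfl
  have hds : ∀ s, d s = A (u (s + 1)) - A (u s) := fun s => rfl
  have hVs : ∀ s, V s = ‖W s‖ ^ 2 + ρ ^ 2 * ‖a s‖ ^ 2 := fun s => rfl
  have hL0' : ∀ u' v' l', L0 u' v' l' = φu u' + φv v' + ⟪l', A u' + B v' - h⟫ := hL0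
  have hlam' : ∀ s, lam (s + 1) = lam s - ρ • (r (s + 1)) := hlamupd
  have hsc : ∀ z : EuclideanSpace ℝ (Fin q), ρ • ((1 / ρ : ℝ) • z) = z := by
    intro z; rw [smul_smul, mul_one_div, div_self hρ.ne', one_smul]
  -- the saddle point is feasible
  have hstar : A ustar + B vstar - h = 0 := by
    have hs : ∀ l : EuclideanSpace ℝ (Fin q),
        ⟪l, A ustar + B vstar - h⟫ ≤ ⟪lamstar, A ustar + B vstar - h⟫ := by
      intro l
      have := hsaddle₁ l
      rw [hL0', hL0'] at this
      linarith
    have h2 := hs (lamstar + (A ustar + B vstar - h))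
    rw [inner_add_left] at h2
    have h3 : ⟪A ustar + B vstar - h, A ustar + B vstar - h⟫ ≤ 0 := by linarith
    have h4 : ‖A ustar + B vstar - h‖ ^ 2 ≤ 0 := by
      rw [← real_inner_self_eq_norm_sq]; exact h3
    have h6 : ‖A ustar + B vstar - h‖ = 0 := by
      nlinarith [norm_nonneg (A ustar + B vstar - h)]
    exact norm_eq_zero.mp h6
  -- inequality 1 (from the saddle point)
  have ineq1 : ∀ s, φu ustar + φv vstar - (φu (u s) + φv (v s)) ≤ ⟪lamstar, r s⟫ := by
    intro s
    have h2 := hsaddle₂ (u s) (hu s) (v s) (hv s)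
    rw [hL0', hL0', hstar, inner_zero_right] at h2
    rw [hr]
    linarith
  -- variational inequality for the u-update
  have VIu : ∀ s, ∀ w ∈ Ωu,
      0 ≤ φu w - φu (u (s + 1)) + ⟪-(lam (s + 1)), A w - A (u (s + 1))⟫ := by
    intro s w hw
    have hmin : ∀ w' ∈ Ωu,
        φu (u (s + 1)) + ρ / 2 * ‖A (u (s + 1)) + (B (v (s + 1)) - h - (1 / ρ) • lam s)‖ ^ 2
        ≤ φu w' + ρ / 2 * ‖A w' + (B (v (s + 1)) - h - (1 / ρ) • lam s)‖ ^ 2 := by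
      intro w' hw'
      have h2 := huupd s w' hw'
      have e : ∀ z : EuclideanSpace ℝ (Fin n),
          toEuc q (Hu.mulVec z) + toEuc q (Hv.mulVec (v (s + 1))) - h - (1 / ρ) • lam s
          = A z + (B (v (s + 1)) - h - (1 / ρ) • lam s) := by
        intro z
        show A z + B (v (s + 1)) - h - (1 / ρ) • lam s = _
        abel
      rwa [e, e] at h2
    have hf := foc φu hφu A _ ρ hρ Ωu hΩucv (u (s + 1)) (hu (s + 1)) hmin w hw
    have hvec : ρ • (A (u (s + 1)) + (B (v (s + 1)) - h - (1 / ρ) • lam s)) = -(lam (s + 1)) := by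
      rw [hlam' s, hr]
      match_scalars <;> field_simp
    rw [← real_inner_smul_left, hvec] at hf
    exact hf
  -- variational inequality for the v-update
  have VIv : ∀ s, ∀ w ∈ Ωv,
      0 ≤ φv w - φv (v (s + 1)) +
        ⟪-(lam (s + 1)) + ρ • (A (u s) - A (u (s + 1))), B w - B (v (s + 1))⟫ := by
    intro s w hw
    have hmin : ∀ w' ∈ Ωv,
        φv (v (s + 1)) + ρ / 2 * ‖B (v (s + 1)) + (A (u s) - h - (1 / ρ) • lam s)‖ ^ 2
        ≤ φv w' + ρ / 2 * ‖B w' + (A (u s) - h - (1 / ρ) • lam s)‖ ^ 2 := by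
      intro w' hw'
      have h2 := hvupd s w' hw'
      have e : ∀ z : EuclideanSpace ℝ (Fin p),
          toEuc q (Hu.mulVec (u s)) + toEuc q (Hv.mulVec z) - h - (1 / ρ) • lam s
          = B z + (A (u s) - h - (1 / ρ) • lam s) := by
        intro z
        show A (u s) + B z - h - (1 / ρ) • lam s = _
        abel
      rwa [e, e] at h2
    have hf := foc φv hφv B _ ρ hρ Ωv hΩvcv (v (s + 1)) (hv (s + 1)) hmin w hw
    have hvec : ρ • (B (v (s + 1)) + (A (u s) - h - (1 / ρ) • lam s))
        = -(lam (s + 1)) + ρ • (A (u s) - A (u (s + 1))) := by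
      rw [hlam' s, hr]
      match_scalars <;> field_simp <;> ring
    rw [← real_inner_smul_left, hvec] at hf
    exact hf
  -- some vector identities
  have hv1 : ∀ s, B vstar - B (v (s + 1)) = a (s + 1) - r (s + 1) := by
    intro s
    rw [has, hr]
    have h2 : B vstar = h - A ustar := by
      have := hstar
      rw [sub_eq_zero] at this
      rw [eq_sub_iff_add_eq]
      rw [add_comm]
      exact this
    rw [h2]
    abel
  have e3 : ∀ s, ⟪A (u s) - A (u (s + 1)), B vstar - B (v (s + 1))⟫
      = -⟪d s, a (s + 1)⟫ + ⟪d s, r (s + 1)⟫ := by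
    intro s
    have hAd : A (u s) - A (u (s + 1)) = -(d s) := by rw [hds]; abel
    rw [hv1 s, hAd, inner_neg_left, inner_sub_right]
    ring
  -- inequality 2
  have ineq2 : ∀ s, φu (u (s + 1)) + φv (v (s + 1)) - (φu ustar + φv vstar)
      ≤ ⟪lam (s + 1), r (s + 1)⟫ + ρ * ⟪A (u s) - A (u (s + 1)), B vstar - B (v (s + 1))⟫ := by
    intro s
    have h1 := VIu s ustar hustar
    have h2 := VIv s vstar hvstar
    rw [inner_add_left, real_inner_smul_left] at h2
    have hvec : A ustar - A (u (s + 1)) + (B vstar - B (v (s + 1))) = -(r (s + 1)) := by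
      rw [hv1 s, has, hr]
      abel
    have e2 : ⟪-(lam (s + 1)), A ustar - A (u (s + 1))⟫
        + ⟪-(lam (s + 1)), B vstar - B (v (s + 1))⟫ = ⟪lam (s + 1), r (s + 1)⟫ := by
      rw [← inner_add_right, hvec, inner_neg_neg]
    linarith
  -- key combined inequality
  have key3 : ∀ s, ⟪W (s + 1), r (s + 1)⟫ + ρ * ⟪d s, a (s + 1)⟫ - ρ * ⟪d s, r (s + 1)⟫ ≤ 0 := by
    intro s
    have h1 := ineq1 (s + 1)
    have h2 := ineq2 s
    rw [e3 s] at h2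
    have e4 : ⟪lamstar, r (s + 1)⟫ + ⟪lam (s + 1), r (s + 1)⟫ = -⟪W (s + 1), r (s + 1)⟫ := by
      rw [hWs, inner_sub_left, inner_neg_left]
      ring
    linarith [h1, h2, e4]
  -- the two norm identities
  have idW : ∀ s, 2 * ρ * ⟪W (s + 1), r (s + 1)⟫
      = ‖W (s + 1)‖ ^ 2 - ‖W s‖ ^ 2 + ρ ^ 2 * ‖r (s + 1)‖ ^ 2 := by
    intro s
    have hW : W (s + 1) = W s + ρ • r (s + 1) := by
      rw [hWs, hWs, hlam' s]
      abel
    rw [hW, norm_add_sq_real, inner_add_left, real_inner_smul_left,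
      real_inner_self_eq_norm_sq, real_inner_smul_right, norm_smul, Real.norm_eq_abs,
      mul_pow, sq_abs]
    ring
  have idA : ∀ s, 2 * ⟪d s, a (s + 1)⟫ = ‖a (s + 1)‖ ^ 2 - ‖a s‖ ^ 2 + ‖d s‖ ^ 2 := by
    intro s
    have hda : d s = a (s + 1) - a s := by rw [hds, has, has]; abel
    rw [hda]
    exact two_inner_aux _ _
  -- cross term sign
  have cross : ∀ s, ⟪r (s + 2), d (s + 1)⟫ ≤ 0 := by
    intro s
    have h1 := VIu s (u (s + 2)) (hu (s + 2))
    have h2 := VIu (s + 1) (u (s + 1)) (hu (s + 1))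
    have e5 : ⟪-(lam (s + 1)), A (u (s + 2)) - A (u (s + 1))⟫
        + ⟪-(lam (s + 2)), A (u (s + 1)) - A (u (s + 2))⟫ = -(ρ * ⟪r (s + 2), d (s + 1)⟫) := by
      have hD : A (u (s + 1)) - A (u (s + 2)) = -(d (s + 1)) := by rw [hds]; abel
      have hD2 : A (u (s + 2)) - A (u (s + 1)) = d (s + 1) := by rw [hds]
      have hl : -(lam (s + 2)) = -(lam (s + 1)) + ρ • r (s + 2) := by
        rw [hlam' (s + 1)]; abel
      rw [hD, hD2, hl, inner_neg_right, inner_add_left, real_inner_smul_left]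
      ring
    by_contra hc
    push_neg at hc
    nlinarith [h1, h2, e5, mul_pos hρ hc]
  -- Lyapunov decrease
  have hdec : ∀ s, V (s + 2) + ρ ^ 2 * ‖r (s + 2)‖ ^ 2 + ρ ^ 2 * ‖d (s + 1)‖ ^ 2 ≤ V (s + 1) := by
    intro s
    have h3 := key3 (s + 1)
    have hW := idW (s + 1)
    have hA2 : 2 * ρ ^ 2 * ⟪d (s + 1), a (s + 2)⟫
        = ρ ^ 2 * ‖a (s + 2)‖ ^ 2 - ρ ^ 2 * ‖a (s + 1)‖ ^ 2 + ρ ^ 2 * ‖d (s + 1)‖ ^ 2 := by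
      linear_combination ρ ^ 2 * idA (s + 1)
    have hc := cross s
    have hcomm : ⟪d (s + 1), r (s + 2)⟫ = ⟪r (s + 2), d (s + 1)⟫ := real_inner_comm _ _
    have hc2 : 2 * ρ ^ 2 * ⟪r (s + 2), d (s + 1)⟫ ≤ 0 := by nlinarith [hc, sq_nonneg ρ]
    have h3' := mul_le_mul_of_nonneg_left h3 (by positivity : (0:ℝ) ≤ 2 * ρ)
    rw [hVs, hVs]
    nlinarith [h3', hW, hA2, hc2, hcomm, hρ]
  have hV0 : ∀ s, 0 ≤ V s := by
    intro s
    rw [hVs]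
    positivity
  have hVb : ∀ k, V (k + 1) ≤ V 1 := by
    intro k
    induction k with
    | zero => exact le_refl _
    | succ k ih =>
      have := hdec k
      have h1 : (0:ℝ) ≤ ρ ^ 2 * ‖r (k + 2)‖ ^ 2 := by positivity
      have h2 : (0:ℝ) ≤ ρ ^ 2 * ‖d (k + 1)‖ ^ 2 := by positivity
      linarith
  -- partial sums bounded
  have hps : ∀ N, ∑ k ∈ Finset.range N, (ρ ^ 2 * ‖r (k + 2)‖ ^ 2 + ρ ^ 2 * ‖d (k + 1)‖ ^ 2)
      ≤ V 1 - V (N + 1) := by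
    intro N
    induction N with
    | zero => simp
    | succ N ih =>
      rw [Finset.sum_range_succ]
      have := hdec N
      linarith
  have hsumm : Summable (fun k => ρ ^ 2 * ‖r (k + 2)‖ ^ 2 + ρ ^ 2 * ‖d (k + 1)‖ ^ 2) := by
    apply summable_of_sum_range_le (c := V 1)
    · intro k; positivity
    · intro N
      have := hps N
      have := hV0 (N + 1)
      linarith
  have hE0 : Tendsto (fun k => ρ ^ 2 * ‖r (k + 2)‖ ^ 2 + ρ ^ 2 * ‖d (k + 1)‖ ^ 2)
      atTop (nhds 0) := hsumm.tendsto_atTop_zero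
  -- residual tends to zero
  have sq_to_norm : ∀ (f : ℕ → EuclideanSpace ℝ (Fin q)),
      Tendsto (fun k => ρ ^ 2 * ‖f k‖ ^ 2) atTop (nhds 0) →
      Tendsto (fun k => ‖f k‖) atTop (nhds 0) := by
    intro f hf
    have h2 : Tendsto (fun k => ‖f k‖ ^ 2) atTop (nhds 0) := by
      have h3 := hf.const_mul ((ρ ^ 2)⁻¹)
      rw [mul_zero] at h3
      refine h3.congr fun k => ?_
      field_simp
    have h4 := (Real.continuous_sqrt.tendsto 0).comp h2
    rw [Real.sqrt_zero] at h4
    exact h4.congr fun k => Real.sqrt_sq (norm_nonneg _)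
  have hr2 : Tendsto (fun k => ‖r (k + 2)‖) atTop (nhds 0) := by
    apply sq_to_norm
    apply tendsto_of_tendsto_of_tendsto_of_le_of_le tendsto_const_nhds hE0
    · intro k; positivity
    · intro k
      show ρ ^ 2 * ‖r (k + 2)‖ ^ 2 ≤ ρ ^ 2 * ‖r (k + 2)‖ ^ 2 + ρ ^ 2 * ‖d (k + 1)‖ ^ 2
      have : (0:ℝ) ≤ ρ ^ 2 * ‖d (k + 1)‖ ^ 2 := by positivity
      linarith
  have hd2 : Tendsto (fun k => ‖d (k + 1)‖) atTop (nhds 0) := by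
    apply sq_to_norm
    apply tendsto_of_tendsto_of_tendsto_of_le_of_le tendsto_const_nhds hE0
    · intro k; positivity
    · intro k
      show ρ ^ 2 * ‖d (k + 1)‖ ^ 2 ≤ ρ ^ 2 * ‖r (k + 2)‖ ^ 2 + ρ ^ 2 * ‖d (k + 1)‖ ^ 2
      have : (0:ℝ) ≤ ρ ^ 2 * ‖r (k + 2)‖ ^ 2 := by positivity
      linarith
  have hrT : Tendsto (fun s => ‖r s‖) atTop (nhds 0) :=
    (Filter.tendsto_add_atTop_iff_nat 2).mp hr2
  have hdT : Tendsto (fun s => ‖d s‖) atTop (nhds 0) :=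
    (Filter.tendsto_add_atTop_iff_nat 1).mp hd2
  have hr1T : Tendsto (fun s => ‖r (s + 1)‖) atTop (nhds 0) :=
    hrT.comp (tendsto_add_atTop_nat 1)
  -- boundedness
  have hWb : ∀ s, ‖W (s + 1)‖ ≤ Real.sqrt (V 1) := by
    intro s
    have h1 : ‖W (s + 1)‖ ^ 2 ≤ V 1 := by
      have := hVb s
      rw [hVs] at this
      have h2 : (0:ℝ) ≤ ρ ^ 2 * ‖a (s + 1)‖ ^ 2 := by positivity
      linarith
    have := Real.sqrt_le_sqrt h1
    rwa [Real.sqrt_sq (norm_nonneg _)] at this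
  have hlamb : ∀ s, ‖lam (s + 1)‖ ≤ Real.sqrt (V 1) + ‖lamstar‖ := by
    intro s
    have h2 : lam (s + 1) = -(W (s + 1)) - lamstar := by rw [hWs]; abel
    calc ‖lam (s + 1)‖ = ‖-(W (s + 1)) - lamstar‖ := by rw [← h2]
      _ ≤ ‖-(W (s + 1))‖ + ‖lamstar‖ := norm_sub_le _ _
      _ = ‖W (s + 1)‖ + ‖lamstar‖ := by rw [norm_neg]
      _ ≤ Real.sqrt (V 1) + ‖lamstar‖ := by linarith [hWb s]
  have hab : ∀ s, ‖a (s + 1)‖ ≤ Real.sqrt (V 1) / ρ := by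
    intro s
    rw [le_div_iff₀ hρ]
    have h1 : (‖a (s + 1)‖ * ρ) ^ 2 ≤ V 1 := by
      have := hVb s
      rw [hVs] at this
      have h2 : (0:ℝ) ≤ ‖W (s + 1)‖ ^ 2 := by positivity
      nlinarith
    have := Real.sqrt_le_sqrt h1
    rwa [Real.sqrt_sq (by positivity)] at this
  -- convergence of the objective
  have T1 : Tendsto (fun s => ⟪lamstar, r (s + 1)⟫) atTop (nhds 0) := by
    have hg : Tendsto (fun s => ‖lamstar‖ * ‖r (s + 1)‖) atTop (nhds 0) := by
      simpa using hr1T.const_mul ‖lamstar‖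
    exact squeeze_zero_norm (fun s => abs_real_inner_le_norm _ _) hg
  have T2 : Tendsto (fun s => ⟪lam (s + 1), r (s + 1)⟫) atTop (nhds 0) := by
    have hg : Tendsto (fun s => (Real.sqrt (V 1) + ‖lamstar‖) * ‖r (s + 1)‖) atTop (nhds 0) := by
      simpa using hr1T.const_mul (Real.sqrt (V 1) + ‖lamstar‖)
    refine squeeze_zero_norm (fun s => ?_) hg
    calc ‖⟪lam (s + 1), r (s + 1)⟫‖ ≤ ‖lam (s + 1)‖ * ‖r (s + 1)‖ :=
            abs_real_inner_le_norm _ _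
        _ ≤ (Real.sqrt (V 1) + ‖lamstar‖) * ‖r (s + 1)‖ :=
            mul_le_mul_of_nonneg_right (hlamb s) (norm_nonneg _)
  have T3 : Tendsto (fun s => ρ * ⟪d s, r (s + 1)⟫) atTop (nhds 0) := by
    have hg : Tendsto (fun s => ρ * (‖d s‖ * ‖r (s + 1)‖)) atTop (nhds 0) := by
      have := (hdT.mul hr1T).const_mul ρ
      simpa using this
    refine squeeze_zero_norm (fun s => ?_) hg
    rw [norm_mul, Real.norm_eq_abs, Real.norm_eq_abs, abs_of_pos hρ]
    exact mul_le_mul_of_nonneg_left (abs_real_inner_le_norm _ _) hρ.le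
  have T4 : Tendsto (fun s => ρ * ⟪d s, a (s + 1)⟫) atTop (nhds 0) := by
    have hg : Tendsto (fun s => ρ * (‖d s‖ * (Real.sqrt (V 1) / ρ))) atTop (nhds 0) := by
      have := (hdT.mul_const (Real.sqrt (V 1) / ρ)).const_mul ρ
      simpa using this
    refine squeeze_zero_norm (fun s => ?_) hg
    rw [norm_mul, Real.norm_eq_abs, Real.norm_eq_abs, abs_of_pos hρ]
    apply mul_le_mul_of_nonneg_left _ hρ.le
    calc |⟪d s, a (s + 1)⟫| ≤ ‖d s‖ * ‖a (s + 1)‖ := abs_real_inner_le_norm _ _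
      _ ≤ ‖d s‖ * (Real.sqrt (V 1) / ρ) :=
          mul_le_mul_of_nonneg_left (hab s) (norm_nonneg _)
  have TU : Tendsto (fun s => ⟪lam (s + 1), r (s + 1)⟫ + ρ * ⟪d s, r (s + 1)⟫
      - ρ * ⟪d s, a (s + 1)⟫) atTop (nhds 0) := by
    have := (T2.add T3).sub T4
    simpa using this
  have hub : ∀ s, φu (u (s + 1)) + φv (v (s + 1)) - (φu ustar + φv vstar)
      ≤ ⟪lam (s + 1), r (s + 1)⟫ + ρ * ⟪d s, r (s + 1)⟫ - ρ * ⟪d s, a (s + 1)⟫ := by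
    intro s
    have h2 := ineq2 s
    rw [e3 s] at h2
    linarith [h2]
  have hlb : ∀ s, -(⟪lamstar, r (s + 1)⟫)
      ≤ φu (u (s + 1)) + φv (v (s + 1)) - (φu ustar + φv vstar) := by
    intro s
    have := ineq1 (s + 1)
    linarith
  have hmid : Tendsto (fun s => φu (u (s + 1)) + φv (v (s + 1)) - (φu ustar + φv vstar))
      atTop (nhds 0) := by
    have hT1n : Tendsto (fun s => -(⟪lamstar, r (s + 1)⟫ : ℝ)) atTop (nhds 0) := by
      simpa using T1.neg
    exact tendsto_of_tendsto_of_tendsto_of_le_of_le hT1n TU hlb hub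
  have hobj1 : Tendsto (fun s => φu (u (s + 1)) + φv (v (s + 1))) atTop
      (nhds (φu ustar + φv vstar)) := by
    have := hmid.add_const (φu ustar + φv vstar)
    simpa using this
  constructor
  · have hfun : (fun s => ‖toEuc q (Hu.mulVec (u s)) + toEuc q (Hv.mulVec (v s)) - h‖)
        = fun s => ‖r s‖ := rfl
    rw [hfun]
    exact hrT
  · exact (Filter.tendsto_add_atTop_iff_nat 1).mp hobj1
end
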